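/- arXiv:1109.5812 — 3 statements merged into one kernel-verified Lean document; each statement's English description precedes it below -/
import Mathlib

section
/- Let Z₁,…,Zₙ be independent nonnegative random variables with μ = ∑ E Z_i and σ² = ∑ E Z_i² < ∞. Then for every 0 < x < μ, P(∑ Z_i ≤ x) ≤ exp(−(μ−x)²/(2σ²)). -/
open Real MeasureTheory ProbabilityTheory

lemma exp_le_quad {u : ℝ} (hu : u ≤ 0) : Real.exp u ≤ 1 + u + u ^ 2 / 2 := by
  have h : MonotoneOn (fun u : ℝ => Real.exp u - (1 + u + u ^ 2 / 2)) (Set.Iic 0) := by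
    apply monotoneOn_of_deriv_nonneg (convex_Iic 0)
    · fun_prop
    · fun_prop
    · intro y hy
      rw [interior_Iic] at hy
      have : deriv (fun u : ℝ => Real.exp u - (1 + u + u ^ 2 / 2)) y
          = Real.exp y - (1 + y) := by
        have h1 : HasDerivAt (fun u : ℝ => Real.exp u - (1 + u + u ^ 2 / 2))
            (Real.exp y - (0 + 1 + (2:ℕ) * y ^ (2-1) / 2)) y := by
          exact ((Real.hasDerivAt_exp y).sub (((hasDerivAt_const y (1:ℝ)).add
            (hasDerivAt_id y)).add (((hasDerivAt_pow 2 y)).div_const 2)))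
        simpa using h1.deriv
      rw [this]
      nlinarith [Real.add_one_le_exp y]
  have := h (Set.mem_Iic.2 hu) (Set.mem_Iic.2 le_rfl) hu
  simp at this
  linarith

theorem stmt_4 {Ω : Type*} [MeasureSpace Ω] [IsProbabilityMeasure (ℙ : Measure Ω)]
    {n : ℕ} (Z : Fin n → Ω → ℝ)
    (hmeas : ∀ i, Measurable (Z i))
    (hindep : iIndepFun Z ℙ)
    (hpos : ∀ i, ∀ ω, 0 ≤ Z i ω)
    (hint1 : ∀ i, Integrable (Z i) ℙ)
    (hint2 : ∀ i, Integrable (fun ω => (Z i ω) ^ 2) ℙ)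
    (μ σ2 : ℝ) (hμ : μ = ∑ i, ∫ ω, Z i ω) (hσ : σ2 = ∑ i, ∫ ω, (Z i ω) ^ 2)
    (x : ℝ) (hx0 : 0 < x) (hxμ : x < μ) :
    (ℙ {ω | ∑ i, Z i ω ≤ x}).toReal ≤ Real.exp (-(μ - x) ^ 2 / (2 * σ2)) := by
  -- σ2 > 0
  have hσnn : 0 ≤ σ2 := by
    rw [hσ]; exact Finset.sum_nonneg fun i _ => integral_nonneg fun ω => sq_nonneg _
  have hσpos : 0 < σ2 := by
    rcases hσnn.lt_or_eq with h | h
    · exact h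
    · exfalso
      have hzero : ∀ i, (∫ ω, Z i ω) = 0 := by
        intro i
        have hterm : (∫ ω, (Z i ω) ^ 2) = 0 := by
          have := (Finset.sum_eq_zero_iff_of_nonneg
            (fun i _ => integral_nonneg fun ω => sq_nonneg (Z i ω))).mp (h ▸ hσ.symm)
          exact this i (Finset.mem_univ i)
        have hae : (fun ω => (Z i ω) ^ 2) =ᵐ[ℙ] 0 :=
          ((integral_eq_zero_iff_of_nonneg (fun ω => sq_nonneg _) (hint2 i)).mp hterm)
        have hae' : Z i =ᵐ[ℙ] 0 := by
          filter_upwards [hae] with ω hω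
          simpa [pow_eq_zero_iff] using hω
        simp [integral_congr_ae hae']
      have : μ = 0 := by simp [hμ, hzero]
      linarith
  set t : ℝ := -(μ - x) / σ2 with ht_def
  have ht : t ≤ 0 := by
    apply div_nonpos_of_nonpos_of_nonneg <;> linarith
  -- integrability of exp (t * (sum))
  have hexp_int : ∀ (f : Ω → ℝ), Measurable f → (∀ ω, 0 ≤ f ω) →
      Integrable (fun ω => Real.exp (t * f ω)) ℙ := by
    intro f hf hfpos
    refine Integrable.mono' (integrable_const 1) ((hf.const_mul t).exp.aestronglyMeasurable) ?_
    filter_upwards with ω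
    rw [Real.norm_eq_abs, abs_of_pos (Real.exp_pos _)]
    exact Real.exp_le_one_iff.mpr (mul_nonpos_of_nonpos_of_nonneg ht (hfpos ω))
  have hSmeas : Measurable (∑ i, Z i) := by
    have h := Finset.measurable_sum (f := Z) Finset.univ fun i _ => hmeas i
    have he : (∑ i, Z i) = fun a => ∑ i, Z i a := by funext a; simp [Finset.sum_apply]
    rw [he]; exact h
  have hSint : Integrable (fun ω => Real.exp (t * (∑ i, Z i) ω)) ℙ := by
    refine hexp_int _ hSmeas fun ω => ?_
    simp only [Finset.sum_apply]
    exact Finset.sum_nonneg fun i _ => hpos i ω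
  have hset : {ω | ∑ i, Z i ω ≤ x} = {ω | (∑ i, Z i) ω ≤ x} := by
    simp [Finset.sum_apply]
  have hch := measure_le_le_exp_mul_mgf (X := ∑ i, Z i) (μ := ℙ) (t := t) x ht hSint
  rw [hset]
  refine hch.trans ?_
  rw [hindep.mgf_sum hmeas]
  -- bound each mgf
  have hfac : ∀ i, mgf (Z i) ℙ t ≤
      Real.exp (t * (∫ ω, Z i ω) + t ^ 2 * (∫ ω, (Z i ω) ^ 2) / 2) := by
    intro i
    have hInt1 : Integrable (fun ω => Real.exp (t * Z i ω)) ℙ := hexp_int _ (hmeas i) (hpos i)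
    have hInt2 : Integrable (fun ω => 1 + t * Z i ω + (t * Z i ω) ^ 2 / 2) ℙ := by
      have : Integrable (fun ω => (t * Z i ω) ^ 2 / 2) ℙ := by
        have := ((hint2 i).const_mul (t ^ 2)).div_const 2
        refine this.congr ?_
        filter_upwards with ω; ring
      exact ((integrable_const 1).add ((hint1 i).const_mul t)).add this
    have h1 : mgf (Z i) ℙ t ≤ ∫ ω, (1 + t * Z i ω + (t * Z i ω) ^ 2 / 2) := by
      refine integral_mono hInt1 hInt2 fun ω => ?_
      exact exp_le_quad (mul_nonpos_of_nonpos_of_nonneg ht (hpos i ω))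
    have hQ : Integrable (fun ω => (t * Z i ω) ^ 2 / 2) ℙ := by
      have := ((hint2 i).const_mul (t ^ 2)).div_const 2
      refine this.congr ?_
      filter_upwards with ω; ring
    have hA : Integrable (fun ω => 1 + t * Z i ω) ℙ :=
      (integrable_const 1).add ((hint1 i).const_mul t)
    have h2 : (∫ ω, (1 + t * Z i ω + (t * Z i ω) ^ 2 / 2)) =
        1 + (t * (∫ ω, Z i ω) + t ^ 2 * (∫ ω, (Z i ω) ^ 2) / 2) := by
      rw [integral_add hA hQ, integral_add (integrable_const 1) ((hint1 i).const_mul t)]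
      rw [integral_const, integral_const_mul]
      have hq : (∫ ω, (t * Z i ω) ^ 2 / 2) = t ^ 2 * (∫ ω, (Z i ω) ^ 2) / 2 := by
        rw [show (fun ω => (t * Z i ω) ^ 2 / 2) = fun ω => (t ^ 2 / 2) * (Z i ω) ^ 2 by
          funext ω; ring]
        rw [integral_const_mul]; ring
      rw [hq]
      simp [measure_univ]
      ring
    calc mgf (Z i) ℙ t ≤ 1 + (t * (∫ ω, Z i ω) + t ^ 2 * (∫ ω, (Z i ω) ^ 2) / 2) := by
          rw [← h2]; exact h1
      _ ≤ _ := by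
          have := Real.add_one_le_exp (t * (∫ ω, Z i ω) + t ^ 2 * (∫ ω, (Z i ω) ^ 2) / 2)
          linarith
  have hprod : (∏ i, mgf (Z i) ℙ t) ≤ Real.exp (t * μ + t ^ 2 * σ2 / 2) := by
    calc (∏ i, mgf (Z i) ℙ t)
        ≤ ∏ i, Real.exp (t * (∫ ω, Z i ω) + t ^ 2 * (∫ ω, (Z i ω) ^ 2) / 2) :=
          Finset.prod_le_prod (fun i _ => mgf_nonneg) (fun i _ => hfac i)
      _ = Real.exp (∑ i, (t * (∫ ω, Z i ω) + t ^ 2 * (∫ ω, (Z i ω) ^ 2) / 2)) := by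
          rw [Real.exp_sum]
      _ = Real.exp (t * μ + t ^ 2 * σ2 / 2) := by
          congr 1
          rw [hμ, hσ, Finset.sum_add_distrib, ← Finset.mul_sum]
          congr 1
          rw [Finset.mul_sum, Finset.sum_div]
  calc Real.exp (-t * x) * ∏ i, mgf (Z i) ℙ t
      ≤ Real.exp (-t * x) * Real.exp (t * μ + t ^ 2 * σ2 / 2) :=
        mul_le_mul_of_nonneg_left hprod (Real.exp_pos _).le
    _ = Real.exp (-(μ - x) ^ 2 / (2 * σ2)) := by
        rw [← Real.exp_add]
        congr 1
        rw [ht_def]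
        field_simp
        ring
end

section
/- Let Y₁, Y₂, … be i.i.d. with E Y₁² = 1 and E|Y₁|^p < ∞ for some p ∈ (2,3]. Set Vₙ² = ∑_{k=1}^n Y_k². Then n · E[(Y₁²/Vₙ²)^{p/2}] ≥ (1 + o(1)) E|Y₁|^p · n^{1−p/2} as n → ∞; more precisely, liminf_{n→∞} n^{p/2} E[(Y₁²/Vₙ²)^{p/2}] ≥ E|Y₁|^p. -/
open Real MeasureTheory ProbabilityTheory Filter Topology

private lemma exp_neg_le_aux {r t : ℝ} (hr1 : 1 ≤ r) (hr2 : r ≤ 2) (ht : 0 ≤ t) :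
    Real.exp (-t) ≤ 1 - t + t ^ r := by
  rcases eq_or_lt_of_le ht with h0 | h0
  · simp [← h0, Real.zero_rpow (by linarith : r ≠ 0)]
  rcases le_or_gt t 1 with h | h
  · have hpos : (0:ℝ) < 1 + t := by linarith
    have h1 : Real.exp (-t) ≤ (1 + t)⁻¹ := by
      rw [Real.exp_neg]
      exact inv_anti₀ hpos (by linarith [Real.add_one_le_exp t])
    have h2 : (1 + t)⁻¹ ≤ 1 - t + t ^ (2:ℝ) := by
      have ht2 : t ^ (2:ℝ) = t ^ (2:ℕ) := by
        rw [← Real.rpow_natCast t 2]; norm_num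
      rw [ht2, ← one_div, div_le_iff₀ hpos]
      nlinarith
    have h3 : t ^ (2:ℝ) ≤ t ^ r := Real.rpow_le_rpow_of_exponent_ge h0 h hr2
    linarith
  · have h1 : Real.exp (-t) ≤ 1 := by
      rw [Real.exp_le_one_iff]; linarith
    have h2 : t ≤ t ^ r := by
      nth_rewrite 1 [← Real.rpow_one t]
      exact Real.rpow_le_rpow_of_exponent_le h.le hr1
    linarith

theorem stmt_14 {Ω : Type*} [MeasureSpace Ω] [IsProbabilityMeasure (ℙ : Measure Ω)]
    (Y : ℕ → Ω → ℝ)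
    (hmeas : ∀ i, Measurable (Y i))
    (hindep : iIndepFun Y ℙ)
    (hident : ∀ i, IdentDistrib (Y i) (Y 0) ℙ ℙ)
    (hvar : ∫ ω, (Y 0 ω) ^ 2 = 1)
    (p : ℝ) (hp : p ∈ Set.Ioc (2 : ℝ) 3)
    (hintp : Integrable (fun ω => |Y 0 ω| ^ p) ℙ) :
    ∫ ω, |Y 0 ω| ^ p ≤
      Filter.liminf (fun n : ℕ =>
        (n : ℝ) ^ (p / 2) *
          ∫ ω, ((Y 0 ω) ^ 2 / ∑ k ∈ Finset.range n, (Y k ω) ^ 2) ^ (p / 2)) atTop := by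
  obtain ⟨hp2, hp3⟩ := hp
  have habs : ∀ ω, 0 ≤ |Y 0 ω| ^ p := fun ω => Real.rpow_nonneg (abs_nonneg _) p
  have hI0 : 0 ≤ ∫ ω, |Y 0 ω| ^ p := integral_nonneg habs
  set I := ∫ ω, |Y 0 ω| ^ p with hIdef
  set r := p / 2 with hrdef
  have hr1 : (1:ℝ) < r := by rw [hrdef]; linarith
  have hr0 : (0:ℝ) < r := by linarith
  have hr32 : r ≤ 3/2 := by rw [hrdef]; linarith
  have hsq : ∀ y : ℝ, ((y ^ 2 : ℝ)) ^ r = |y| ^ p := by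
    intro y
    rw [← sq_abs, ← Real.rpow_natCast |y| 2, ← Real.rpow_mul (abs_nonneg y)]
    congr 1
    push_cast
    rw [hrdef]; ring
  -- basic measurability and positivity
  have hSmeas : ∀ n : ℕ, Measurable (fun ω => ∑ k ∈ Finset.range n, (Y k ω) ^ 2) :=
    fun n => Finset.measurable_sum _ (fun k _ => (hmeas k).pow_const 2)
  have hSnn : ∀ (n : ℕ) (ω : Ω), 0 ≤ ∑ k ∈ Finset.range n, (Y k ω) ^ 2 :=
    fun n ω => Finset.sum_nonneg fun k _ => sq_nonneg _
  have hrpowmeas : Measurable fun x : ℝ => x ^ r :=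
    (Real.continuous_rpow_const hr0.le).measurable
  have hFmeas : ∀ n : ℕ,
      Measurable (fun ω => ((Y 0 ω) ^ 2 / ∑ k ∈ Finset.range n, (Y k ω) ^ 2) ^ r) :=
    fun n => hrpowmeas.comp (((hmeas 0).pow_const 2).div (hSmeas n))
  have hFnn : ∀ (n : ℕ) (ω : Ω),
      0 ≤ ((Y 0 ω) ^ 2 / ∑ k ∈ Finset.range n, (Y k ω) ^ 2) ^ r :=
    fun n ω => Real.rpow_nonneg (div_nonneg (sq_nonneg _) (hSnn n ω)) r
  have hFle1 : ∀ n : ℕ, 0 < n → ∀ ω,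
      ((Y 0 ω) ^ 2 / ∑ k ∈ Finset.range n, (Y k ω) ^ 2) ^ r ≤ 1 := by
    intro n hn ω
    apply Real.rpow_le_one (div_nonneg (sq_nonneg _) (hSnn n ω)) _ hr0.le
    apply div_le_one_of_le₀ _ (hSnn n ω)
    exact Finset.single_le_sum (fun k _ => sq_nonneg (Y k ω)) (Finset.mem_range.mpr hn)
  have hFint : ∀ n : ℕ,
      Integrable (fun ω => ((Y 0 ω) ^ 2 / ∑ k ∈ Finset.range n, (Y k ω) ^ 2) ^ r) := by
    intro n
    rcases Nat.eq_zero_or_pos n with h | h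
    · subst h
      simpa [Real.zero_rpow hr0.ne'] using integrable_const (c := (0:ℝ)) (μ := (ℙ : Measure Ω))
    · refine Integrable.mono' (integrable_const 1) (hFmeas n).aestronglyMeasurable
        (ae_of_all _ fun ω => ?_)
      rw [Real.norm_eq_abs, abs_of_nonneg (hFnn n ω)]
      exact hFle1 n h ω
  have hgint : ∀ n : ℕ, Integrable
      (fun ω => (n:ℝ) ^ r * ((Y 0 ω) ^ 2 / ∑ k ∈ Finset.range n, (Y k ω) ^ 2) ^ r) :=
    fun n => (hFint n).const_mul _
  have hgnn : ∀ (n : ℕ) (ω : Ω),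
      0 ≤ (n:ℝ) ^ r * ((Y 0 ω) ^ 2 / ∑ k ∈ Finset.range n, (Y k ω) ^ 2) ^ r :=
    fun n ω => mul_nonneg (Real.rpow_nonneg (Nat.cast_nonneg n) r) (hFnn n ω)
  have haeq : ∀ n : ℕ,
      (n:ℝ) ^ r * ∫ ω, ((Y 0 ω) ^ 2 / ∑ k ∈ Finset.range n, (Y k ω) ^ 2) ^ r
        = ∫ ω, (n:ℝ) ^ r * ((Y 0 ω) ^ 2 / ∑ k ∈ Finset.range n, (Y k ω) ^ 2) ^ r :=
    fun n => (integral_const_mul _ _).symm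
  -- integrability of Y₀²
  have hX2int : Integrable (fun ω => (Y 0 ω) ^ 2) := by
    refine Integrable.mono' ((integrable_const 1).add hintp)
      ((hmeas 0).pow_const 2).aestronglyMeasurable (ae_of_all _ fun ω => ?_)
    rw [Real.norm_eq_abs, abs_of_nonneg (sq_nonneg _)]
    simp only [Pi.add_apply]
    rcases le_or_gt (|Y 0 ω|) 1 with h | h
    · have h1 : (Y 0 ω) ^ 2 ≤ 1 := by
        rw [← sq_abs]; nlinarith [abs_nonneg (Y 0 ω)]
      linarith [habs ω]
    · have h2 : (Y 0 ω) ^ 2 = |Y 0 ω| ^ (2:ℝ) := by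
        rw [← sq_abs, ← Real.rpow_natCast |Y 0 ω| 2]; norm_num
      have h3 : |Y 0 ω| ^ (2:ℝ) ≤ |Y 0 ω| ^ p :=
        Real.rpow_le_rpow_of_exponent_le h.le (by linarith)
      rw [h2]; linarith
  -- squares are independent and identically distributed
  have hsqindep : iIndepFun (fun i => fun ω => (Y i ω) ^ 2) ℙ :=
    hindep.comp (fun _ => fun x : ℝ => x ^ 2) (fun _ => measurable_id.pow_const 2)
  have hid2 : ∀ i, IdentDistrib (fun ω => (Y i ω) ^ 2) (fun ω => (Y 0 ω) ^ 2) ℙ ℙ :=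
    fun i => (hident i).comp (measurable_id.pow_const 2)
  -- strong law of large numbers
  have hlln : ∀ᵐ ω, Tendsto (fun n : ℕ => (∑ k ∈ Finset.range n, (Y k ω) ^ 2) / n)
      atTop (𝓝 1) := by
    have hind2 : Pairwise (Function.onFun (IndepFun · · ℙ) (fun i => fun ω => (Y i ω) ^ 2)) :=
      fun i j hij => (hsqindep.indepFun hij)
    have hsl := ProbabilityTheory.strong_law_ae (μ := (ℙ : Measure Ω))
      (fun i => fun ω => (Y i ω) ^ 2) hX2int hind2 hid2
    rw [hvar] at hsl
    filter_upwards [hsl] with ω hω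
    simpa [smul_eq_mul, inv_mul_eq_div] using hω
  -- almost sure convergence of the rescaled integrands
  have hgtend : ∀ᵐ ω, Tendsto
      (fun n : ℕ => (n:ℝ) ^ r * ((Y 0 ω) ^ 2 / ∑ k ∈ Finset.range n, (Y k ω) ^ 2) ^ r)
      atTop (𝓝 (|Y 0 ω| ^ p)) := by
    filter_upwards [hlln] with ω hω
    have hgid : ∀ n : ℕ,
        (n:ℝ) ^ r * ((Y 0 ω) ^ 2 / ∑ k ∈ Finset.range n, (Y k ω) ^ 2) ^ r
          = |Y 0 ω| ^ p * ((n:ℝ) / ∑ k ∈ Finset.range n, (Y k ω) ^ 2) ^ r := by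
      intro n
      rw [Real.div_rpow (sq_nonneg _) (hSnn n ω), Real.div_rpow (Nat.cast_nonneg n) (hSnn n ω),
        hsq (Y 0 ω)]
      ring
    simp only [hgid]
    have h1 : Tendsto (fun n : ℕ => (n:ℝ) / ∑ k ∈ Finset.range n, (Y k ω) ^ 2)
        atTop (𝓝 1) := by
      have h := hω.inv₀ one_ne_zero
      simpa [inv_div] using h
    have h2 := h1.rpow_const (Or.inr hr0.le)
    rw [Real.one_rpow] at h2
    have h3 := h2.const_mul (|Y 0 ω| ^ p)
    simpa using h3
  -- Fatou's lemma
  have fatou := MeasureTheory.lintegral_liminf_le (μ := (ℙ : Measure Ω))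
    (u := atTop) (f := fun (n : ℕ) ω => ENNReal.ofReal
      ((n:ℝ) ^ r * ((Y 0 ω) ^ 2 / ∑ k ∈ Finset.range n, (Y k ω) ^ 2) ^ r))
    (fun n => (measurable_const.mul (hFmeas n)).ennreal_ofReal)
  have hleft : ENNReal.ofReal I = ∫⁻ ω, liminf (fun n : ℕ => ENNReal.ofReal
      ((n:ℝ) ^ r * ((Y 0 ω) ^ 2 / ∑ k ∈ Finset.range n, (Y k ω) ^ 2) ^ r)) atTop ∂ℙ := by
    rw [hIdef, MeasureTheory.ofReal_integral_eq_lintegral_ofReal hintp (ae_of_all _ habs)]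
    refine lintegral_congr_ae ?_
    filter_upwards [hgtend] with ω hω
    exact (((ENNReal.continuous_ofReal.tendsto _).comp hω).liminf_eq).symm
  have hright : ∀ n : ℕ, (∫⁻ ω, ENNReal.ofReal
      ((n:ℝ) ^ r * ((Y 0 ω) ^ 2 / ∑ k ∈ Finset.range n, (Y k ω) ^ 2) ^ r) ∂ℙ)
      = ENNReal.ofReal
        ((n:ℝ) ^ r * ∫ ω, ((Y 0 ω) ^ 2 / ∑ k ∈ Finset.range n, (Y k ω) ^ 2) ^ r) := by
    intro n
    rw [haeq n, ← MeasureTheory.ofReal_integral_eq_lintegral_ofReal (hgint n)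
      (ae_of_all _ (hgnn n))]
  have KEY1 : ENNReal.ofReal I ≤ liminf (fun n : ℕ => ENNReal.ofReal
      ((n:ℝ) ^ r * ∫ ω, ((Y 0 ω) ^ 2 / ∑ k ∈ Finset.range n, (Y k ω) ^ 2) ^ r)) atTop := by
    rw [hleft]
    refine fatou.trans (le_of_eq ?_)
    simp only [hright]
  -- Chernoff bound set-up
  set u := min 1 ((4 * (I + 1))⁻¹ ^ (r - 1)⁻¹) with hudef
  have hI1 : (0:ℝ) < 4 * (I + 1) := by linarith
  have hu0 : 0 < u := lt_min one_pos (Real.rpow_pos_of_pos (inv_pos.mpr hI1) _)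
  have hu1 : u ≤ 1 := min_le_left _ _
  have hukey : u ^ (r - 1) * I ≤ 1 / 4 := by
    have h1 : u ^ (r - 1) ≤ (4 * (I + 1))⁻¹ := by
      calc u ^ (r - 1) ≤ ((4 * (I + 1))⁻¹ ^ (r - 1)⁻¹) ^ (r - 1) :=
            Real.rpow_le_rpow hu0.le (min_le_right _ _) (by linarith)
        _ = (4 * (I + 1))⁻¹ := by
            rw [← Real.rpow_mul (inv_nonneg.mpr hI1.le),
              inv_mul_cancel₀ (by linarith : r - 1 ≠ 0), Real.rpow_one]
    calc u ^ (r - 1) * I ≤ (4 * (I + 1))⁻¹ * (I + 1) := by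
          apply mul_le_mul h1 (by linarith) hI0 (inv_nonneg.mpr hI1.le)
      _ ≤ 1 / 4 := by
          rw [inv_mul_eq_div, div_le_div_iff₀ hI1 (by norm_num)]
          ring_nf
          nlinarith
  -- bound on the mgf of Y₀² at -u
  set ρ := mgf (fun ω => (Y 0 ω) ^ 2) ℙ (-u) with hρdef
  have hexp_int : ∀ (T : Ω → ℝ), Measurable T → (∀ ω, 0 ≤ T ω) →
      Integrable (fun ω => Real.exp (-u * T ω)) := by
    intro T hT hTnn
    refine Integrable.mono' (integrable_const 1)
      ((hT.const_mul (-u)).exp).aestronglyMeasurable (ae_of_all _ fun ω => ?_)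
    rw [Real.norm_eq_abs, abs_of_nonneg (Real.exp_nonneg _), Real.exp_le_one_iff]
    have := hTnn ω
    nlinarith
  have hρle : ρ ≤ 1 - 3 * u / 4 := by
    have hsubint : Integrable (fun ω => 1 - u * (Y 0 ω) ^ 2) :=
      (integrable_const 1).sub (hX2int.const_mul u)
    have hmulint : Integrable (fun ω => u ^ r * |Y 0 ω| ^ p) := hintp.const_mul _
    have hRint : Integrable (fun ω => 1 - u * (Y 0 ω) ^ 2 + u ^ r * |Y 0 ω| ^ p) :=
      hsubint.add hmulint
    have hmono : ρ ≤ ∫ ω, (1 - u * (Y 0 ω) ^ 2 + u ^ r * |Y 0 ω| ^ p) := by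
      rw [hρdef]
      refine integral_mono (hexp_int _ ((hmeas 0).pow_const 2) (fun ω => sq_nonneg _)) hRint
        fun ω => ?_
      have ht := exp_neg_le_aux hr1.le (by linarith : r ≤ 2)
        (mul_nonneg hu0.le (sq_nonneg (Y 0 ω)))
      have hmr : (u * (Y 0 ω) ^ 2) ^ r = u ^ r * |Y 0 ω| ^ p := by
        rw [Real.mul_rpow hu0.le (sq_nonneg _), hsq]
      simp only []
      rw [show -u * (Y 0 ω) ^ 2 = -(u * (Y 0 ω) ^ 2) by ring]
      rw [hmr] at ht
      exact ht
    have hRval : (∫ ω, (1 - u * (Y 0 ω) ^ 2 + u ^ r * |Y 0 ω| ^ p)) = 1 - u + u ^ r * I := by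
      have hmul2int : Integrable (fun ω => u * (Y 0 ω) ^ 2) := hX2int.const_mul u
      rw [integral_add hsubint hmulint, integral_sub (integrable_const 1) hmul2int,
        integral_const, integral_const_mul, integral_const_mul, hvar]
      simp [hIdef]
    have hur : u ^ r = u * u ^ (r - 1) := by
      rw [show r = 1 + (r - 1) by ring, Real.rpow_add hu0, Real.rpow_one]
      ring_nf
    have : u ^ r * I ≤ u / 4 := by
      rw [hur, mul_assoc]
      calc u * (u ^ (r - 1) * I) ≤ u * (1 / 4) := by
            exact mul_le_mul_of_nonneg_left hukey hu0.le
        _ = u / 4 := by ring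
    rw [hRval] at hmono
    linarith
  have hρ2 : ρ ≤ Real.exp (-(3 * u / 4)) :=
    hρle.trans (by linarith [Real.add_one_le_exp (-(3 * u / 4))])
  have hρ0 : 0 ≤ ρ := mgf_nonneg
  -- Chernoff bound on the lower tail of the partial sums without the first term
  have hTmeas : ∀ n : ℕ, Measurable (fun ω => ∑ k ∈ Finset.Ico 1 n, (Y k ω) ^ 2) :=
    fun n => Finset.measurable_sum _ (fun k _ => (hmeas k).pow_const 2)
  have hTnn : ∀ (n : ℕ) (ω : Ω), 0 ≤ ∑ k ∈ Finset.Ico 1 n, (Y k ω) ^ 2 :=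
    fun n ω => Finset.sum_nonneg fun k _ => sq_nonneg _
  have hEmeas : ∀ n : ℕ, MeasurableSet {ω | (∑ k ∈ Finset.Ico 1 n, (Y k ω) ^ 2) ≤ (n:ℝ)/2} :=
    fun n => measurableSet_le (hTmeas n) measurable_const
  have hcher : ∀ n : ℕ,
      (ℙ {ω | (∑ k ∈ Finset.Ico 1 n, (Y k ω) ^ 2) ≤ (n:ℝ)/2}).toReal
        ≤ Real.exp (u * n / 2) * Real.exp (-(3 * u / 4)) ^ (n - 1) := by
    intro n
    have hint := hexp_int _ (hTmeas n) (hTnn n)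
    have h0 := ProbabilityTheory.measure_le_le_exp_mul_mgf (μ := (ℙ : Measure Ω))
      (X := fun ω => ∑ k ∈ Finset.Ico 1 n, (Y k ω) ^ 2) ((n:ℝ)/2) (t := -u)
      (by linarith) hint
    rw [show -(-u) * ((n:ℝ)/2) = u * n / 2 by ring] at h0
    have hmgf : mgf (fun ω => ∑ k ∈ Finset.Ico 1 n, (Y k ω) ^ 2) ℙ (-u) = ρ ^ (n - 1) := by
      have hfun : (fun ω => ∑ k ∈ Finset.Ico 1 n, (Y k ω) ^ 2)
          = ∑ k ∈ Finset.Ico 1 n, (fun ω => (Y k ω) ^ 2) := by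
        funext ω; simp
      rw [hfun, hsqindep.mgf_sum (fun i => (hmeas i).pow_const 2)]
      have hterm : ∀ i ∈ Finset.Ico 1 n, mgf (fun ω => (Y i ω) ^ 2) ℙ (-u) = ρ := by
        intro i _
        rw [hρdef]
        simp only [mgf]
        exact ((hid2 i).comp (measurable_exp.comp (measurable_const_mul (-u)))).integral_eq
      rw [Finset.prod_congr rfl hterm, Finset.prod_const, Nat.card_Ico]
    rw [hmgf] at h0
    refine h0.trans ?_
    have : ρ ^ (n - 1) ≤ Real.exp (-(3 * u / 4)) ^ (n - 1) := pow_le_pow_left₀ hρ0 hρ2 _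
    exact mul_le_mul_of_nonneg_left this (Real.exp_nonneg _)
  -- the Chernoff tail bound decays faster than n^r
  have hdecay : Tendsto (fun n : ℕ =>
      (n:ℝ) ^ r * (Real.exp (u * n / 2) * Real.exp (-(3 * u / 4)) ^ (n - 1)))
      atTop (𝓝 0) := by
    have hbase : Tendsto (fun n : ℕ =>
        Real.exp (3 * u / 4) * ((n:ℝ) ^ r * Real.exp (-(u/4) * n))) atTop (𝓝 0) := by
      have h := (tendsto_rpow_mul_exp_neg_mul_atTop_nhds_zero r (u/4)
        (by positivity)).comp tendsto_natCast_atTop_atTop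
      simpa using h.const_mul (Real.exp (3 * u / 4))
    refine hbase.congr' ?_
    filter_upwards [eventually_ge_atTop 1] with n hn
    rw [← Real.exp_nat_mul, Nat.cast_sub hn, ← Real.exp_add, mul_comm (Real.exp (3 * u / 4)),
      mul_assoc, ← Real.exp_add]
    congr 2
    push_cast
    ring
  -- eventual upper bound on the sequence, giving coboundedness
  have hboundev : ∀ᶠ n : ℕ in atTop,
      (n:ℝ) ^ r * ∫ ω, ((Y 0 ω) ^ 2 / ∑ k ∈ Finset.range n, (Y k ω) ^ 2) ^ r
        ≤ 1 + 2 ^ r * I := by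
    have hsmall : ∀ᶠ n : ℕ in atTop,
        (n:ℝ) ^ r * (Real.exp (u * n / 2) * Real.exp (-(3 * u / 4)) ^ (n - 1)) < 1 :=
      hdecay.eventually_lt_const one_pos
    filter_upwards [hsmall, eventually_ge_atTop 1] with n hsm hn
    have hn0 : 0 < n := hn
    have hncastpos : (0:ℝ) < n := by exact_mod_cast hn0
    -- pointwise bound on the integrand
    have hpt : ∀ ω, (n:ℝ) ^ r * ((Y 0 ω) ^ 2 / ∑ k ∈ Finset.range n, (Y k ω) ^ 2) ^ r
        ≤ (n:ℝ) ^ r * Set.indicator {ω' | (∑ k ∈ Finset.Ico 1 n, (Y k ω') ^ 2) ≤ (n:ℝ)/2}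
            (fun _ => (1:ℝ)) ω + 2 ^ r * |Y 0 ω| ^ p := by
      intro ω
      by_cases hT : (∑ k ∈ Finset.Ico 1 n, (Y k ω) ^ 2) ≤ (n:ℝ)/2
      · have hmem : ω ∈ {ω' | (∑ k ∈ Finset.Ico 1 n, (Y k ω') ^ 2) ≤ (n:ℝ)/2} := hT
        simp only [Set.indicator_of_mem hmem]
        have h1 : (n:ℝ) ^ r * ((Y 0 ω) ^ 2 / ∑ k ∈ Finset.range n, (Y k ω) ^ 2) ^ r
            ≤ (n:ℝ) ^ r * 1 :=
          mul_le_mul_of_nonneg_left (hFle1 n hn0 ω) (Real.rpow_nonneg (Nat.cast_nonneg n) r)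
        have h2 : 0 ≤ 2 ^ r * |Y 0 ω| ^ p :=
          mul_nonneg (Real.rpow_nonneg (by norm_num) r) (habs ω)
        linarith
      · have hmem : ω ∉ {ω' | (∑ k ∈ Finset.Ico 1 n, (Y k ω') ^ 2) ≤ (n:ℝ)/2} := hT
        simp only [Set.indicator_of_notMem hmem]
        push_neg at hT
        have hhalf : (0:ℝ) < (n:ℝ)/2 := by positivity
        have hTS : (∑ k ∈ Finset.Ico 1 n, (Y k ω) ^ 2) ≤ ∑ k ∈ Finset.range n, (Y k ω) ^ 2 := by
          apply Finset.sum_le_sum_of_subset_of_nonneg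
          · rw [Finset.range_eq_Ico]
            exact Finset.Ico_subset_Ico (Nat.zero_le 1) le_rfl
          · exact fun k _ _ => sq_nonneg _
        have hdiv : (Y 0 ω) ^ 2 / (∑ k ∈ Finset.range n, (Y k ω) ^ 2)
            ≤ (Y 0 ω) ^ 2 / ((n:ℝ)/2) :=
          div_le_div_of_nonneg_left (sq_nonneg _) hhalf (le_trans hT.le hTS)
        have hF : ((Y 0 ω) ^ 2 / ∑ k ∈ Finset.range n, (Y k ω) ^ 2) ^ r
            ≤ ((Y 0 ω) ^ 2 / ((n:ℝ)/2)) ^ r :=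
          Real.rpow_le_rpow (div_nonneg (sq_nonneg _) (hSnn n ω)) hdiv hr0.le
        have heq : (n:ℝ) ^ r * ((Y 0 ω) ^ 2 / ((n:ℝ)/2)) ^ r = 2 ^ r * |Y 0 ω| ^ p := by
          rw [← Real.mul_rpow (Nat.cast_nonneg n) (div_nonneg (sq_nonneg _) hhalf.le),
            show (n:ℝ) * ((Y 0 ω) ^ 2 / ((n:ℝ)/2)) = 2 * (Y 0 ω) ^ 2 by
              field_simp,
            Real.mul_rpow (by norm_num) (sq_nonneg _), hsq]
        calc (n:ℝ) ^ r * ((Y 0 ω) ^ 2 / ∑ k ∈ Finset.range n, (Y k ω) ^ 2) ^ r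
            ≤ (n:ℝ) ^ r * ((Y 0 ω) ^ 2 / ((n:ℝ)/2)) ^ r :=
              mul_le_mul_of_nonneg_left hF (Real.rpow_nonneg (Nat.cast_nonneg n) r)
          _ = 2 ^ r * |Y 0 ω| ^ p := heq
          _ ≤ (n:ℝ) ^ r * 0 + 2 ^ r * |Y 0 ω| ^ p := by simp
    -- integrate the pointwise bound
    have hRint : Integrable (fun ω =>
        (n:ℝ) ^ r * Set.indicator {ω' | (∑ k ∈ Finset.Ico 1 n, (Y k ω') ^ 2) ≤ (n:ℝ)/2} (fun _ => (1:ℝ)) ω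
          + 2 ^ r * |Y 0 ω| ^ p) := by
      refine Integrable.add ?_ (hintp.const_mul _)
      exact ((integrable_const (1:ℝ)).indicator (hEmeas n)).const_mul _
    have hint1 : (∫ ω, ((n:ℝ) ^ r *
        Set.indicator {ω' | (∑ k ∈ Finset.Ico 1 n, (Y k ω') ^ 2) ≤ (n:ℝ)/2} (fun _ => (1:ℝ)) ω
          + 2 ^ r * |Y 0 ω| ^ p))
        = (n:ℝ) ^ r * (ℙ {ω | (∑ k ∈ Finset.Ico 1 n, (Y k ω) ^ 2) ≤ (n:ℝ)/2}).toReal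
          + 2 ^ r * I := by
      have hA : Integrable (fun ω => (n:ℝ) ^ r *
          Set.indicator {ω' | (∑ k ∈ Finset.Ico 1 n, (Y k ω') ^ 2) ≤ (n:ℝ)/2}
            (fun _ => (1:ℝ)) ω) :=
        ((integrable_const (1:ℝ)).indicator (hEmeas n)).const_mul _
      have hB : Integrable (fun ω => 2 ^ r * |Y 0 ω| ^ p) := hintp.const_mul _
      rw [integral_add hA hB, integral_const_mul, integral_const_mul,
        integral_indicator_const (1:ℝ) (hEmeas n), smul_eq_mul, mul_one, measureReal_def, hIdef]
    calc (n:ℝ) ^ r * ∫ ω, ((Y 0 ω) ^ 2 / ∑ k ∈ Finset.range n, (Y k ω) ^ 2) ^ r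
        = ∫ ω, (n:ℝ) ^ r * ((Y 0 ω) ^ 2 / ∑ k ∈ Finset.range n, (Y k ω) ^ 2) ^ r := haeq n
      _ ≤ ∫ ω, ((n:ℝ) ^ r *
            Set.indicator {ω' | (∑ k ∈ Finset.Ico 1 n, (Y k ω') ^ 2) ≤ (n:ℝ)/2} (fun _ => (1:ℝ)) ω
            + 2 ^ r * |Y 0 ω| ^ p) := integral_mono (hgint n) hRint hpt
      _ = (n:ℝ) ^ r * (ℙ {ω | (∑ k ∈ Finset.Ico 1 n, (Y k ω) ^ 2) ≤ (n:ℝ)/2}).toReal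
            + 2 ^ r * I := hint1
      _ ≤ 1 + 2 ^ r * I := by
          have h1 : (n:ℝ) ^ r * (ℙ {ω | (∑ k ∈ Finset.Ico 1 n, (Y k ω) ^ 2) ≤ (n:ℝ)/2}).toReal
              ≤ (n:ℝ) ^ r * (Real.exp (u * n / 2) * Real.exp (-(3 * u / 4)) ^ (n - 1)) :=
            mul_le_mul_of_nonneg_left (hcher n) (Real.rpow_nonneg (Nat.cast_nonneg n) r)
          linarith
  have hcob : IsCoboundedUnder (· ≥ ·) atTop (fun n : ℕ =>
      (n:ℝ) ^ r * ∫ ω, ((Y 0 ω) ^ 2 / ∑ k ∈ Finset.range n, (Y k ω) ^ 2) ^ r) :=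
    IsBoundedUnder.isCoboundedUnder_ge ⟨1 + 2 ^ r * I, eventually_map.mpr hboundev⟩
  have hann : ∀ n : ℕ, 0 ≤ (n:ℝ) ^ r * ∫ ω, ((Y 0 ω) ^ 2 / ∑ k ∈ Finset.range n, (Y k ω) ^ 2) ^ r :=
    fun n => mul_nonneg (Real.rpow_nonneg (Nat.cast_nonneg n) r)
      (integral_nonneg (hFnn n))
  -- conclude
  refine le_of_forall_lt fun c hc => ?_
  have hcm : c < (c + I) / 2 := by linarith
  have hmI : (c + I) / 2 < I := by linarith
  have hev : ∀ᶠ n : ℕ in atTop, (c + I) / 2 ≤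
      (n:ℝ) ^ r * ∫ ω, ((Y 0 ω) ^ 2 / ∑ k ∈ Finset.range n, (Y k ω) ^ 2) ^ r := by
    by_contra h
    have hfreq : ∃ᶠ n : ℕ in atTop,
        (n:ℝ) ^ r * (∫ ω, ((Y 0 ω) ^ 2 / ∑ k ∈ Finset.range n, (Y k ω) ^ 2) ^ r) < (c + I) / 2 :=
      (Filter.not_eventually.mp h).mono fun n hn => not_le.mp hn
    rcases le_or_gt ((c + I) / 2) 0 with hm | hm
    · obtain ⟨n, hn⟩ := hfreq.exists
      linarith [hann n]
    · have h1 : liminf (fun n : ℕ => ENNReal.ofReal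
          ((n:ℝ) ^ r * ∫ ω, ((Y 0 ω) ^ 2 / ∑ k ∈ Finset.range n, (Y k ω) ^ 2) ^ r)) atTop
          ≤ ENNReal.ofReal ((c + I) / 2) :=
        liminf_le_of_frequently_le' (hfreq.mono fun n hn => ENNReal.ofReal_le_ofReal hn.le)
      have h2 := le_trans KEY1 h1
      rw [ENNReal.ofReal_le_ofReal_iff hm.le] at h2
      linarith
  have hliminf := le_liminf_of_le hcob hev
  exact lt_of_lt_of_le hcm hliminf
end

section
/- Let Y₁, Y₂, … be i.i.d. with E Y₁² = 1 and E|Y₁|^p < ∞ for some p ∈ (2,3]. Set Vₙ² = ∑_{k=1}^n Y_k². Then limsup_{n→∞} n^{p/2} E[(Y₁²/Vₙ²)^{p/2}] ≤ E|Y₁|^p. Combined with the matching lower bound, n E[(Y₁²/Vₙ²)^{p/2}] ∼ E|Y₁|^p n^{1−p/2}. -/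
open Real MeasureTheory ProbabilityTheory Filter

lemma aux_exp_neg_le {x : ℝ} (hx : 0 ≤ x) : Real.exp (-x) ≤ 1 - x + x ^ 2 := by
  have h1 : (1 : ℝ) + x ≤ Real.exp x := by have := Real.add_one_le_exp x; linarith
  have h0 : (0 : ℝ) < 1 + x := by linarith
  have h2 : Real.exp (-x) ≤ (1 + x)⁻¹ := by
    rw [Real.exp_neg]
    exact inv_anti₀ h0 h1
  refine h2.trans ?_
  rw [inv_le_iff_one_le_mul₀ h0]
  nlinarith

lemma aux_pow_le_exp {x : ℝ} (hx : 0 ≤ x) (m : ℕ) : x ^ m ≤ Real.exp ((m : ℝ) * (x - 1)) := by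
  have h1 : x ≤ Real.exp (x - 1) := by
    have := Real.add_one_le_exp (x - 1); linarith
  calc x ^ m ≤ (Real.exp (x - 1)) ^ m := pow_le_pow_left₀ hx h1 m
    _ = Real.exp ((m : ℝ) * (x - 1)) := by rw [← Real.exp_nat_mul]

lemma aux_tendsto (s b α : ℝ) (hb : 0 < b) (hα : 0 < α) :
    Tendsto (fun n : ℕ => (n : ℝ) ^ s * Real.exp (-b * (n : ℝ) ^ α)) atTop (nhds 0) := by
  have h1 : Tendsto (fun n : ℕ => (n : ℝ) ^ α) atTop atTop :=
    (tendsto_rpow_atTop hα).comp tendsto_natCast_atTop_atTop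
  have h2 := (tendsto_rpow_mul_exp_neg_mul_atTop_nhds_zero (s / α) b hb).comp h1
  apply h2.congr'
  filter_upwards [eventually_ge_atTop 1] with n hn
  have hn0 : (0 : ℝ) ≤ (n : ℝ) := Nat.cast_nonneg n
  simp only [Function.comp_apply]
  have hs : α * (s / α) = s := by field_simp
  rw [← Real.rpow_mul hn0, hs]

set_option maxHeartbeats 2000000 in
lemma aux_decay {Ω : Type*} [MeasureSpace Ω] [IsProbabilityMeasure (ℙ : Measure Ω)]
    (Y : ℕ → Ω → ℝ) (hmeas : ∀ i, Measurable (Y i))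
    (hindep : iIndepFun Y ℙ)
    (hident : ∀ i, IdentDistrib (Y i) (Y 0) ℙ ℙ)
    (hvar : ∫ ω, (Y 0 ω) ^ 2 = 1)
    (p : ℝ) (hp : p ∈ Set.Ioc (2 : ℝ) 3)
    (hintp : Integrable (fun ω => |Y 0 ω| ^ p) ℙ)
    (ε : ℝ) (hε0 : 0 < ε) (hε1 : ε < 1) :
    Tendsto (fun n : ℕ => (n : ℝ) ^ (p / 2) *
      (ℙ {ω | ∑ k ∈ Finset.Ico 1 n,
          min ((Y k ω) ^ 2) ((n : ℝ) ^ (2 / p)) ≤ (1 - ε) * n}).toReal)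
      atTop (nhds 0) := by
  obtain ⟨hp2, hp3⟩ := hp
  have hp0 : (0 : ℝ) < p := by linarith
  -- truncated squares
  set g : ℕ → ℝ → ℝ := fun n x => min (x ^ 2) ((n : ℝ) ^ (2 / p)) with hg
  have hgmeas : ∀ n : ℕ, Measurable (g n) := fun n =>
    (measurable_id.pow_const 2).min measurable_const
  set Z : ℕ → ℕ → Ω → ℝ := fun n k => g n ∘ Y k with hZ
  have hZmeas : ∀ n k, Measurable (Z n k) := fun n k => (hgmeas n).comp (hmeas k)
  have hZ0 : ∀ n k ω, 0 ≤ Z n k ω := fun n k ω =>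
    le_min (sq_nonneg _) (Real.rpow_nonneg (Nat.cast_nonneg n) _)
  have hZc : ∀ n k ω, Z n k ω ≤ (n : ℝ) ^ (2 / p) := fun n k ω => min_le_right _ _
  -- moments
  set M : ℝ := ∫ ω, |Y 0 ω| ^ p with hM
  have hM0 : 0 ≤ M := integral_nonneg fun ω => Real.rpow_nonneg (abs_nonneg _) _
  set M' : ℝ := M + 1 with hM'
  have hM'0 : 0 < M' := by linarith
  set B : ℕ → ℝ := fun n => (n : ℝ) ^ ((4 - p) / p) with hB
  have hBpos : ∀ n : ℕ, 1 ≤ n → (1 : ℝ) ≤ B n := by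
    intro n hn
    exact Real.one_le_rpow (by exact_mod_cast hn) (div_nonneg (by linarith) hp0.le)
  -- integrability of Y₀²
  have hY2le : ∀ ω, (Y 0 ω) ^ 2 ≤ 1 + |Y 0 ω| ^ p := by
    intro ω
    rcases le_or_gt (|Y 0 ω|) 1 with h | h
    · have : (Y 0 ω) ^ 2 = |Y 0 ω| ^ 2 := (sq_abs _).symm
      nlinarith [abs_nonneg (Y 0 ω), Real.rpow_nonneg (abs_nonneg (Y 0 ω)) p]
    · have h2 : (Y 0 ω) ^ 2 = |Y 0 ω| ^ (2 : ℝ) := by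
        rw [show ((2:ℝ)) = ((2:ℕ):ℝ) by norm_num, Real.rpow_natCast, sq_abs]
      have h3 : |Y 0 ω| ^ (2 : ℝ) ≤ |Y 0 ω| ^ p :=
        Real.rpow_le_rpow_of_exponent_le h.le (by linarith)
      linarith [h2 ▸ h3]
  have hY2int : Integrable (fun ω => (Y 0 ω) ^ 2) ℙ := by
    refine Integrable.mono' (g := fun ω => 1 + |Y 0 ω| ^ p)
      ((integrable_const 1).add hintp)
      ((hmeas 0).pow_const 2).aestronglyMeasurable ?_
    filter_upwards with ω
    rw [Real.norm_eq_abs, abs_of_nonneg (sq_nonneg _)]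
    exact hY2le ω
  -- Z integrable
  have hZint : ∀ n k, Integrable (Z n k) ℙ := by
    intro n k
    refine Integrable.mono' (integrable_const ((n : ℝ) ^ (2 / p)))
      (hZmeas n k).aestronglyMeasurable ?_
    filter_upwards with ω
    rw [Real.norm_eq_abs, abs_of_nonneg (hZ0 n k ω)]
    exact hZc n k ω
  have hZ2int : ∀ n k, Integrable (fun ω => (Z n k ω) ^ 2) ℙ := by
    intro n k
    refine Integrable.mono' (integrable_const (((n : ℝ) ^ (2 / p)) ^ 2))
      ((hZmeas n k).pow_const 2).aestronglyMeasurable ?_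
    filter_upwards with ω
    rw [Real.norm_eq_abs, abs_of_nonneg (sq_nonneg _)]
    exact pow_le_pow_left₀ (hZ0 n k ω) (hZc n k ω) 2
  -- first moment convergence
  set I : ℕ → ℝ := fun n => ∫ ω, Z n 0 ω with hI
  have hItend : Tendsto I atTop (nhds 1) := by
    rw [← hvar]
    refine tendsto_integral_of_dominated_convergence (fun ω => (Y 0 ω) ^ 2)
      (fun n => (hZmeas n 0).aestronglyMeasurable) hY2int ?_ ?_
    · intro n
      filter_upwards with ω
      rw [Real.norm_eq_abs, abs_of_nonneg (hZ0 n 0 ω)]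
      exact min_le_left _ _
    · filter_upwards with ω
      have h1 : Tendsto (fun n : ℕ => (n : ℝ) ^ (2 / p)) atTop atTop :=
        (tendsto_rpow_atTop (by positivity)).comp tendsto_natCast_atTop_atTop
      have h2 : ∀ᶠ n : ℕ in atTop, Z n 0 ω = (Y 0 ω) ^ 2 := by
        filter_upwards [h1.eventually_ge_atTop ((Y 0 ω) ^ 2)] with n hn
        exact min_eq_left hn
      have h2' : (fun _ : ℕ => (Y 0 ω) ^ 2) =ᶠ[atTop] fun n => Z n 0 ω := by
        filter_upwards [h2] with n hn
        exact hn.symm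
      exact Tendsto.congr' h2' tendsto_const_nhds
  -- second moment bound
  have hZ2bd : ∀ n : ℕ, 1 ≤ n → ∀ ω, (Z n 0 ω) ^ 2 ≤ B n * |Y 0 ω| ^ p := by
    intro n hn ω
    set z := Z n 0 ω with hz
    have hz0 : 0 ≤ z := hZ0 n 0 ω
    have hzc : z ≤ (n : ℝ) ^ (2 / p) := hZc n 0 ω
    have hzy : z ≤ (Y 0 ω) ^ 2 := min_le_left _ _
    have e1 : z ^ 2 = z ^ ((4 - p) / 2) * z ^ (p / 2) := by
      have hne : (4 - p) / 2 + p / 2 ≠ 0 := by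
        have h : (4 - p) / 2 + p / 2 = 2 := by ring
        rw [h]; norm_num
      rw [← Real.rpow_natCast z 2, ← Real.rpow_add' hz0 hne]
      congr 1
      push_cast
      ring
    have e2 : z ^ ((4 - p) / 2) ≤ ((n : ℝ) ^ (2 / p)) ^ ((4 - p) / 2) :=
      Real.rpow_le_rpow hz0 hzc (by linarith)
    have e3 : ((n : ℝ) ^ (2 / p)) ^ ((4 - p) / 2) = B n := by
      rw [← Real.rpow_mul (Nat.cast_nonneg n)]
      congr 1
      field_simp
    have e4 : z ^ (p / 2) ≤ ((Y 0 ω) ^ 2) ^ (p / 2) :=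
      Real.rpow_le_rpow hz0 hzy (by positivity)
    have e5 : ((Y 0 ω) ^ 2 : ℝ) ^ (p / 2) = |Y 0 ω| ^ p := by
      rw [← sq_abs, ← Real.rpow_natCast (|Y 0 ω|) 2, ← Real.rpow_mul (abs_nonneg _)]
      congr 1
      push_cast
      ring
    calc z ^ 2 = z ^ ((4 - p) / 2) * z ^ (p / 2) := e1
      _ ≤ B n * |Y 0 ω| ^ p := by
          rw [← e3, ← e5]
          exact mul_le_mul e2 e4 (Real.rpow_nonneg hz0 _)
            (Real.rpow_nonneg (Real.rpow_nonneg (Nat.cast_nonneg n) _) _)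
  have hJ : ∀ n : ℕ, 1 ≤ n → ∫ ω, (Z n 0 ω) ^ 2 ≤ B n * M' := by
    intro n hn
    have h1 : ∫ ω, (Z n 0 ω) ^ 2 ≤ ∫ ω, B n * |Y 0 ω| ^ p :=
      integral_mono (hZ2int n 0) (hintp.const_mul _) (hZ2bd n hn)
    rw [integral_const_mul] at h1
    have hBn : (0:ℝ) ≤ B n := by linarith [hBpos n hn]
    have hMM' : M ≤ M' := by rw [hM']; linarith
    have := mul_le_mul_of_nonneg_left hMM' hBn
    linarith
  -- the rate
  set t : ℕ → ℝ := fun n => ε / (4 * B n * M') with ht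
  have htpos : ∀ n : ℕ, 1 ≤ n → 0 < t n := by
    intro n hn
    have := hBpos n hn
    apply div_pos hε0
    positivity
  -- Chernoff bound
  have key : ∀ n : ℕ, 1 ≤ n → 4 / ε ≤ (n : ℝ) → 1 - ε / 4 ≤ I n →
      (ℙ {ω | ∑ k ∈ Finset.Ico 1 n,
          min ((Y k ω) ^ 2) ((n : ℝ) ^ (2 / p)) ≤ (1 - ε) * n}).toReal ≤
        Real.exp (-(ε ^ 2 / (16 * M')) * (n : ℝ) ^ (2 - 4 / p)) := by
    intro n hn1 hn4 hIn
    have hBn1 : (1 : ℝ) ≤ B n := hBpos n hn1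
    have hBn0 : (0 : ℝ) < B n := by linarith
    have htn : 0 < t n := htpos n hn1
    set X : Ω → ℝ := ∑ k ∈ Finset.Ico 1 n, Z n k with hX
    have hXapp : ∀ ω, X ω = ∑ k ∈ Finset.Ico 1 n, Z n k ω := by
      intro ω; simp [hX, Finset.sum_apply]
    have hXfun : X = fun ω => ∑ k ∈ Finset.Ico 1 n, Z n k ω := by
      funext ω; simp [hX, Finset.sum_apply]
    have hXmeas : Measurable X := by
      rw [hXfun]; exact Finset.measurable_sum _ fun k _ => hZmeas n k
    have hX0 : ∀ ω, 0 ≤ X ω := by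
      intro ω; rw [hXapp]
      exact Finset.sum_nonneg fun k _ => hZ0 n k ω
    have hint : Integrable (fun ω => Real.exp (-t n * X ω)) ℙ := by
      refine Integrable.mono' (integrable_const 1)
        (((hXmeas.const_mul _).exp).aestronglyMeasurable) ?_
      filter_upwards with ω
      rw [Real.norm_eq_abs, abs_of_nonneg (Real.exp_nonneg _)]
      rw [show (1 : ℝ) = Real.exp 0 by simp]
      apply Real.exp_le_exp.2
      have := hX0 ω
      nlinarith
    have hset : {ω | ∑ k ∈ Finset.Ico 1 n,
          min ((Y k ω) ^ 2) ((n : ℝ) ^ (2 / p)) ≤ (1 - ε) * n} = {ω | X ω ≤ (1 - ε) * n} := by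
      ext ω; simp [hXapp, hZ, hg, Function.comp]
    rw [hset]
    have hcher := measure_le_le_exp_mul_mgf (μ := ℙ) (X := X) ((1 - ε) * n)
      (t := -t n) (by linarith) hint
    rw [neg_neg] at hcher
    -- mgf of the sum
    have hiind : iIndepFun (fun k => Z n k) ℙ :=
      hindep.comp (fun _ => g n) (fun _ => hgmeas n)
    have hmgfsum : mgf X ℙ (-t n) = (mgf (Z n 0) ℙ (-t n)) ^ (n - 1) := by
      rw [hX, iIndepFun.mgf_sum hiind (fun k => hZmeas n k)]
      have hsame : ∀ k ∈ Finset.Ico 1 n, mgf (Z n k) ℙ (-t n) = mgf (Z n 0) ℙ (-t n) := by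
        intro k _
        have hid : IdentDistrib (Z n k) (Z n 0) ℙ ℙ := (hident k).comp (hgmeas n)
        have := (hid.comp (u := fun x => Real.exp (-t n * x))
          ((measurable_id.const_mul _).exp)).integral_eq
        simpa [mgf, Function.comp] using this
      rw [Finset.prod_congr rfl hsame, Finset.prod_const, Nat.card_Ico]
    -- bound mgf of one term
    set E : ℝ := mgf (Z n 0) ℙ (-t n) with hE
    have hE0 : 0 ≤ E := mgf_nonneg
    have hexpint : Integrable (fun ω => Real.exp (-t n * Z n 0 ω)) ℙ := by
      refine Integrable.mono' (integrable_const 1)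
        ((((hZmeas n 0).const_mul _).exp).aestronglyMeasurable) ?_
      filter_upwards with ω
      rw [Real.norm_eq_abs, abs_of_nonneg (Real.exp_nonneg _)]
      rw [show (1 : ℝ) = Real.exp 0 by simp]
      apply Real.exp_le_exp.2
      nlinarith [hZ0 n 0 ω]
    have hEle : E ≤ 1 - t n * I n + t n ^ 2 * (B n * M') := by
      have hpt : ∀ ω, Real.exp (-t n * Z n 0 ω) ≤
          1 - t n * Z n 0 ω + t n ^ 2 * (Z n 0 ω) ^ 2 := by
        intro ω
        have h := aux_exp_neg_le (mul_nonneg htn.le (hZ0 n 0 ω))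
        calc Real.exp (-t n * Z n 0 ω) = Real.exp (-(t n * Z n 0 ω)) := by ring_nf
          _ ≤ 1 - t n * Z n 0 ω + (t n * Z n 0 ω) ^ 2 := h
          _ = 1 - t n * Z n 0 ω + t n ^ 2 * (Z n 0 ω) ^ 2 := by ring
      have hrhsint : Integrable
          (fun ω => 1 - t n * Z n 0 ω + t n ^ 2 * (Z n 0 ω) ^ 2) ℙ :=
        (((integrable_const 1).sub ((hZint n 0).const_mul _)).add
          ((hZ2int n 0).const_mul _))
      have h1 : E ≤ ∫ ω, (1 - t n * Z n 0 ω + t n ^ 2 * (Z n 0 ω) ^ 2) := by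
        rw [hE]
        simp only [mgf]
        exact integral_mono hexpint hrhsint hpt
      have hint1 : Integrable (fun ω => 1 - t n * Z n 0 ω) ℙ :=
        (integrable_const 1).sub ((hZint n 0).const_mul _)
      have hint2 : Integrable (fun ω => t n ^ 2 * (Z n 0 ω) ^ 2) ℙ :=
        (hZ2int n 0).const_mul _
      have hint3 : Integrable (fun ω => t n * Z n 0 ω) ℙ := (hZint n 0).const_mul _
      have h2 : ∫ ω, (1 - t n * Z n 0 ω + t n ^ 2 * (Z n 0 ω) ^ 2) =
          1 - t n * I n + t n ^ 2 * ∫ ω, (Z n 0 ω) ^ 2 := by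
        rw [integral_add hint1 hint2,
          integral_sub (integrable_const 1) hint3,
          integral_const_mul, integral_const_mul, integral_const]
        simp [hI]
      rw [h2] at h1
      have := mul_le_mul_of_nonneg_left (hJ n hn1) (sq_nonneg (t n))
      linarith
    -- combine
    have hpow : E ^ (n - 1) ≤ Real.exp (((n - 1 : ℕ) : ℝ) * (E - 1)) :=
      aux_pow_le_exp hE0 (n - 1)
    have hcast : ((n - 1 : ℕ) : ℝ) = (n : ℝ) - 1 := by
      rw [Nat.cast_sub hn1]; simp
    have hq : (ℙ {ω | X ω ≤ (1 - ε) * n}).toReal ≤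
        Real.exp (t n * ((1 - ε) * n) + ((n : ℝ) - 1) * (E - 1)) := by
      calc (ℙ {ω | X ω ≤ (1 - ε) * n}).toReal
          ≤ Real.exp (t n * ((1 - ε) * n)) * mgf X ℙ (-t n) := hcher
        _ = Real.exp (t n * ((1 - ε) * n)) * E ^ (n - 1) := by rw [hmgfsum]
        _ ≤ Real.exp (t n * ((1 - ε) * n)) * Real.exp (((n : ℝ) - 1) * (E - 1)) := by
            rw [← hcast]
            exact mul_le_mul_of_nonneg_left hpow (Real.exp_nonneg _)
        _ = Real.exp (t n * ((1 - ε) * n) + ((n : ℝ) - 1) * (E - 1)) := by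
            rw [← Real.exp_add]
    refine hq.trans (Real.exp_le_exp.2 ?_)
    -- exponent arithmetic
    have hn1R : (1 : ℝ) ≤ (n : ℝ) := by exact_mod_cast hn1
    have htB : t n * (B n * M') = ε / 4 := by
      rw [ht]
      field_simp
    have hstep1 : ((n : ℝ) - 1) * (E - 1) ≤
        ((n : ℝ) - 1) * (-(t n * I n) + t n ^ 2 * (B n * M')) := by
      apply mul_le_mul_of_nonneg_left _ (by linarith)
      linarith
    have hstep2 : (1 - ε / 2) * n ≤ ((n : ℝ) - 1) * I n := by
      have h1 : ((n : ℝ) - 1) * (1 - ε / 4) ≤ ((n : ℝ) - 1) * I n :=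
        mul_le_mul_of_nonneg_left hIn (by linarith)
      have h2 : (1:ℝ) ≤ (n : ℝ) * ε / 4 := by
        rw [div_le_iff₀ hε0] at hn4
        linarith
      linarith
    have hstep3 : ((n : ℝ) - 1) * (t n ^ 2 * (B n * M')) ≤
        (n : ℝ) * (t n ^ 2 * (B n * M')) := by
      apply mul_le_mul_of_nonneg_right (by linarith)
      positivity
    have hnB : (n : ℝ) ^ (2 - 4 / p) * B n = (n : ℝ) := by
      rw [hB, ← Real.rpow_add (by linarith : (0:ℝ) < (n:ℝ))]
      have : 2 - 4 / p + (4 - p) / p = 1 := by field_simp; ring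
      rw [this, Real.rpow_one]
    have hfinal : t n * ((1 - ε) * n) - t n * ((1 - ε / 2) * n) +
        (n : ℝ) * (t n ^ 2 * (B n * M')) ≤
        -(ε ^ 2 / (16 * M')) * (n : ℝ) ^ (2 - 4 / p) := by
      have e1 : t n * ((1 - ε) * n) - t n * ((1 - ε / 2) * n) +
          (n : ℝ) * (t n ^ 2 * (B n * M')) = (n : ℝ) * t n * (-(ε / 2) + ε / 4) := by
        have : t n ^ 2 * (B n * M') = t n * (ε / 4) := by
          rw [pow_two, mul_assoc, htB]
        rw [this]; ring
      rw [e1]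
      have e2 : (n : ℝ) * t n * (-(ε / 2) + ε / 4) = -(ε / 4) * ((n : ℝ) * t n) := by ring
      rw [e2]
      have hBne : B n ≠ 0 := ne_of_gt hBn0
      have hMne : M' ≠ 0 := ne_of_gt hM'0
      have hN : (n : ℝ) ^ (2 - 4 / p) = (n : ℝ) / B n := by
        rw [eq_div_iff hBne]; exact hnB
      have hd1 : (0:ℝ) < 4 * B n * M' := mul_pos (mul_pos (by norm_num) hBn0) hM'0
      have hd2 : (0:ℝ) < 4 * M' := by linarith
      have e3 : (n : ℝ) * t n = (ε / (4 * M')) * (n : ℝ) ^ (2 - 4 / p) := by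
        rw [hN]
        show (n:ℝ) * (ε / (4 * B n * M')) = ε / (4 * M') * ((n:ℝ) / B n)
        rw [mul_div_assoc', div_mul_div_comm,
          div_eq_div_iff (ne_of_gt hd1) (ne_of_gt (mul_pos hd2 hBn0))]
        ring
      rw [e3]
      have e5 : ε / 4 * (ε / (4 * M')) = ε ^ 2 / (16 * M') := by
        rw [div_mul_div_comm]
        congr 1
        · ring
        · ring
      have e4 : -(ε / 4) * (ε / (4 * M') * (n : ℝ) ^ (2 - 4 / p)) =
          -(ε ^ 2 / (16 * M')) * (n : ℝ) ^ (2 - 4 / p) := by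
        rw [neg_mul, neg_mul, neg_inj, ← mul_assoc, e5]
      rw [e4]
    have hstep2' : ((n : ℝ) - 1) * (-(t n * I n)) ≤ -(t n * ((1 - ε / 2) * n)) := by
      have hr : ((n : ℝ) - 1) * (-(t n * I n)) = -(t n * (((n : ℝ) - 1) * I n)) := by ring
      rw [hr]
      have := mul_le_mul_of_nonneg_left hstep2 htn.le
      linarith
    rw [mul_add] at hstep1
    clear_value E X t I M' M B Z g
    linarith [hstep1, hstep2', hstep3, hfinal]
  -- conclude by squeezing
  have hb : (0 : ℝ) < ε ^ 2 / (16 * M') := by positivity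
  have hα : (0 : ℝ) < 2 - 4 / p := by
    have : 4 / p < 2 := by rw [div_lt_iff₀ hp0]; linarith
    linarith
  refine squeeze_zero' ?_ ?_ (aux_tendsto (p / 2) (ε ^ 2 / (16 * M')) (2 - 4 / p) hb hα)
  · filter_upwards with n
    positivity
  · have hev1 : ∀ᶠ n : ℕ in atTop, 1 - ε / 4 ≤ I n := by
      exact hItend.eventually (eventually_ge_nhds (show 1 - ε / 4 < 1 by linarith))
    have hev2 : ∀ᶠ n : ℕ in atTop, 4 / ε ≤ (n : ℝ) :=
      tendsto_natCast_atTop_atTop.eventually_ge_atTop (4 / ε)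
    filter_upwards [eventually_ge_atTop 1, hev1, hev2] with n hn1 hIn hn4
    have := key n hn1 hn4 hIn
    calc (n : ℝ) ^ (p / 2) * (ℙ {ω | ∑ k ∈ Finset.Ico 1 n,
          min ((Y k ω) ^ 2) ((n : ℝ) ^ (2 / p)) ≤ (1 - ε) * n}).toReal
        ≤ (n : ℝ) ^ (p / 2) * Real.exp (-(ε ^ 2 / (16 * M')) * (n : ℝ) ^ (2 - 4 / p)) := by
          apply mul_le_mul_of_nonneg_left this (Real.rpow_nonneg (Nat.cast_nonneg n) _)
      _ = _ := rfl

theorem stmt_15 {Ω : Type*} [MeasureSpace Ω] [IsProbabilityMeasure (ℙ : Measure Ω)]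
    (Y : ℕ → Ω → ℝ)
    (hmeas : ∀ i, Measurable (Y i))
    (hindep : iIndepFun Y ℙ)
    (hident : ∀ i, IdentDistrib (Y i) (Y 0) ℙ ℙ)
    (hvar : ∫ ω, (Y 0 ω) ^ 2 = 1)
    (p : ℝ) (hp : p ∈ Set.Ioc (2 : ℝ) 3)
    (hintp : Integrable (fun ω => |Y 0 ω| ^ p) ℙ) :
    Filter.limsup (fun n : ℕ =>
        (n : ℝ) ^ (p / 2) *
          ∫ ω, ((Y 0 ω) ^ 2 / ∑ k ∈ Finset.range n, (Y k ω) ^ 2) ^ (p / 2)) atTop ≤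
      ∫ ω, |Y 0 ω| ^ p := by
  obtain ⟨hp2, hp3⟩ := hp
  have hp0 : (0 : ℝ) < p := by linarith
  set M : ℝ := ∫ ω, |Y 0 ω| ^ p with hM
  have hM0 : 0 ≤ M := integral_nonneg fun ω => Real.rpow_nonneg (abs_nonneg _) _
  set f : ℕ → ℝ := fun n => (n : ℝ) ^ (p / 2) *
      ∫ ω, ((Y 0 ω) ^ 2 / ∑ k ∈ Finset.range n, (Y k ω) ^ 2) ^ (p / 2) with hf
  have hr0 : ∀ (n : ℕ) (ω : Ω),
      0 ≤ (Y 0 ω) ^ 2 / ∑ k ∈ Finset.range n, (Y k ω) ^ 2 := fun n ω =>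
    div_nonneg (sq_nonneg _) (Finset.sum_nonneg fun k _ => sq_nonneg _)
  have hf0 : ∀ n, 0 ≤ f n := fun n =>
    mul_nonneg (Real.rpow_nonneg (Nat.cast_nonneg n) _)
      (integral_nonneg fun ω => Real.rpow_nonneg (hr0 n ω) _)
  have hr1 : ∀ (n : ℕ), 1 ≤ n → ∀ (ω : Ω),
      (Y 0 ω) ^ 2 / (∑ k ∈ Finset.range n, (Y k ω) ^ 2) ≤ 1 := by
    intro n hn ω
    have hD0 : 0 ≤ ∑ k ∈ Finset.range n, (Y k ω) ^ 2 :=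
      Finset.sum_nonneg fun k _ => sq_nonneg _
    have hyD : (Y 0 ω) ^ 2 ≤ ∑ k ∈ Finset.range n, (Y k ω) ^ 2 :=
      Finset.single_le_sum (f := fun k => (Y k ω) ^ 2) (fun k _ => sq_nonneg _)
        (Finset.mem_range.2 (by omega))
    rcases eq_or_lt_of_le hD0 with h | h
    · rw [← h]; simp
    · rw [div_le_one h]; exact hyD
  have hDmeas : ∀ n : ℕ, Measurable (fun ω => ∑ k ∈ Finset.range n, (Y k ω) ^ 2) :=
    fun n => Finset.measurable_sum _ fun k _ => (hmeas k).pow_const 2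
  have hrmeas : ∀ n : ℕ, Measurable (fun ω =>
      ((Y 0 ω) ^ 2 / ∑ k ∈ Finset.range n, (Y k ω) ^ 2) ^ (p / 2)) := fun n =>
    by fun_prop
  -- main per-epsilon bound
  have main : ∀ ε : ℝ, 0 < ε → ε < 1 →
      Filter.limsup f atTop ≤ M * (1 - ε) ^ (-(p / 2)) := by
    intro ε hε0 hε1
    have h1ε : (0 : ℝ) < 1 - ε := by linarith
    have hdecay := aux_decay Y hmeas hindep hident hvar p ⟨hp2, hp3⟩ hintp ε hε0 hε1
    -- eventual bound on f
    have hbound : ∀ n : ℕ, 1 ≤ n → f n ≤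
        (n : ℝ) ^ (p / 2) * (ℙ {ω | ∑ k ∈ Finset.Ico 1 n,
          min ((Y k ω) ^ 2) ((n : ℝ) ^ (2 / p)) ≤ (1 - ε) * n}).toReal +
        M * (1 - ε) ^ (-(p / 2)) := by
      intro n hn
      have hnR : (1 : ℝ) ≤ (n : ℝ) := by exact_mod_cast hn
      set S : Set Ω := {ω | ∑ k ∈ Finset.Ico 1 n,
          min ((Y k ω) ^ 2) ((n : ℝ) ^ (2 / p)) ≤ (1 - ε) * n} with hS
      have hSmeas : MeasurableSet S := by
        apply measurableSet_le _ measurable_const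
        exact Finset.measurable_sum _ fun k _ =>
          ((hmeas k).pow_const 2).min measurable_const
      have hA0 : (0 : ℝ) < (1 - ε) * n := by nlinarith
      set C : ℝ := ((1 - ε) * n) ^ (p / 2) with hC
      have hC0 : 0 < C := Real.rpow_pos_of_pos hA0 _
      -- pointwise bound
      have hpt : ∀ ω, ((Y 0 ω) ^ 2 / ∑ k ∈ Finset.range n, (Y k ω) ^ 2) ^ (p / 2) ≤
          S.indicator (fun _ => (1 : ℝ)) ω + |Y 0 ω| ^ p / C := by
        intro ω
        by_cases hω : ω ∈ S
        · rw [Set.indicator_of_mem hω]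
          have h1 : ((Y 0 ω) ^ 2 / ∑ k ∈ Finset.range n, (Y k ω) ^ 2) ^ (p / 2) ≤ 1 :=
            Real.rpow_le_one (hr0 n ω) (hr1 n hn ω) (by positivity)
          have h2 : 0 ≤ |Y 0 ω| ^ p / C :=
            div_nonneg (Real.rpow_nonneg (abs_nonneg _) _) hC0.le
          linarith
        · rw [Set.indicator_of_notMem hω]
          rw [hS, Set.mem_setOf_eq, not_le] at hω
          have hsub : ∑ k ∈ Finset.Ico 1 n, min ((Y k ω) ^ 2) ((n : ℝ) ^ (2 / p)) ≤
              ∑ k ∈ Finset.range n, (Y k ω) ^ 2 := by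
            calc ∑ k ∈ Finset.Ico 1 n, min ((Y k ω) ^ 2) ((n : ℝ) ^ (2 / p))
                ≤ ∑ k ∈ Finset.Ico 1 n, (Y k ω) ^ 2 :=
                  Finset.sum_le_sum fun k _ => min_le_left _ _
              _ ≤ ∑ k ∈ Finset.range n, (Y k ω) ^ 2 := by
                  apply Finset.sum_le_sum_of_subset_of_nonneg
                  · rw [Finset.range_eq_Ico]
                    exact Finset.Ico_subset_Ico (by omega) le_rfl
                  · intro k _ _; exact sq_nonneg _
          have hDgt : (1 - ε) * n < ∑ k ∈ Finset.range n, (Y k ω) ^ 2 :=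
            lt_of_lt_of_le hω hsub
          have hr : (Y 0 ω) ^ 2 / ∑ k ∈ Finset.range n, (Y k ω) ^ 2 ≤
              (Y 0 ω) ^ 2 / ((1 - ε) * n) := by
            gcongr
          have h3 : ((Y 0 ω) ^ 2 / ∑ k ∈ Finset.range n, (Y k ω) ^ 2) ^ (p / 2) ≤
              ((Y 0 ω) ^ 2 / ((1 - ε) * n)) ^ (p / 2) :=
            Real.rpow_le_rpow (hr0 n ω) hr (by positivity)
          have h4 : ((Y 0 ω) ^ 2 / ((1 - ε) * n)) ^ (p / 2) = |Y 0 ω| ^ p / C := by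
            rw [Real.div_rpow (sq_nonneg _) hA0.le]
            congr 1
            rw [← sq_abs, ← Real.rpow_natCast (|Y 0 ω|) 2,
              ← Real.rpow_mul (abs_nonneg _)]
            congr 1
            push_cast
            ring
          linarith [h3, h4.le, h4.ge]
      -- integrate
      have hLint : Integrable (fun ω =>
          ((Y 0 ω) ^ 2 / ∑ k ∈ Finset.range n, (Y k ω) ^ 2) ^ (p / 2)) ℙ := by
        refine Integrable.mono' (integrable_const 1)
          (hrmeas n).aestronglyMeasurable ?_
        filter_upwards with ω
        rw [Real.norm_eq_abs, abs_of_nonneg (Real.rpow_nonneg (hr0 n ω) _)]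
        exact Real.rpow_le_one (hr0 n ω) (hr1 n hn ω) (by positivity)
      have hind_int : Integrable (S.indicator (fun _ => (1 : ℝ))) ℙ :=
        (integrable_const 1).indicator hSmeas
      have hdiv_int : Integrable (fun ω => |Y 0 ω| ^ p / C) ℙ := hintp.div_const C
      have hle : ∫ ω, ((Y 0 ω) ^ 2 / ∑ k ∈ Finset.range n, (Y k ω) ^ 2) ^ (p / 2) ≤
          (ℙ S).toReal + M / C := by
        have h1 : ∫ ω, ((Y 0 ω) ^ 2 / ∑ k ∈ Finset.range n, (Y k ω) ^ 2) ^ (p / 2) ≤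
            ∫ ω, (S.indicator (fun _ => (1 : ℝ)) ω + |Y 0 ω| ^ p / C) :=
          integral_mono hLint (hind_int.add hdiv_int) hpt
        rw [integral_add hind_int hdiv_int, integral_indicator_const _ hSmeas,
          integral_div] at h1
        simp [hM] at h1
        exact h1
      -- multiply by n^(p/2)
      have hN0 : (0 : ℝ) < (n : ℝ) ^ (p / 2) := Real.rpow_pos_of_pos (by linarith) _
      have hmulC : (n : ℝ) ^ (p / 2) * (M / C) = M * (1 - ε) ^ (-(p / 2)) := by
        have hCsplit : C = (1 - ε) ^ (p / 2) * (n : ℝ) ^ (p / 2) := by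
          rw [hC, Real.mul_rpow h1ε.le (by linarith : (0:ℝ) ≤ (n:ℝ))]
        have hA : (0 : ℝ) < (1 - ε) ^ (p / 2) := Real.rpow_pos_of_pos h1ε _
        rw [hCsplit, Real.rpow_neg h1ε.le]
        field_simp
      calc f n = (n : ℝ) ^ (p / 2) *
            ∫ ω, ((Y 0 ω) ^ 2 / ∑ k ∈ Finset.range n, (Y k ω) ^ 2) ^ (p / 2) := rfl
        _ ≤ (n : ℝ) ^ (p / 2) * ((ℙ S).toReal + M / C) :=
            mul_le_mul_of_nonneg_left hle hN0.le
        _ = (n : ℝ) ^ (p / 2) * (ℙ S).toReal + (n : ℝ) ^ (p / 2) * (M / C) := by ring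
        _ = (n : ℝ) ^ (p / 2) * (ℙ S).toReal + M * (1 - ε) ^ (-(p / 2)) := by
            rw [hmulC]
    -- limsup bound
    refine le_of_forall_pos_le_add fun δ hδ => ?_
    refine limsup_le_of_le (isCoboundedUnder_le_of_le atTop hf0) ?_
    have hev : ∀ᶠ n : ℕ in atTop, (n : ℝ) ^ (p / 2) *
        (ℙ {ω | ∑ k ∈ Finset.Ico 1 n,
          min ((Y k ω) ^ 2) ((n : ℝ) ^ (2 / p)) ≤ (1 - ε) * n}).toReal < δ :=
      hdecay.eventually (gt_mem_nhds hδ)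
    filter_upwards [eventually_ge_atTop 1, hev] with n hn1 hevn
    have := hbound n hn1
    linarith
  -- let ε → 0
  have lim : Tendsto (fun k : ℕ => M * (1 - 1 / ((k : ℝ) + 2)) ^ (-(p / 2))) atTop
      (nhds M) := by
    have h1 : Tendsto (fun k : ℕ => ((k : ℝ) + 2)) atTop atTop :=
      tendsto_atTop_add_const_right _ 2 tendsto_natCast_atTop_atTop
    have h2 : Tendsto (fun k : ℕ => 1 / ((k : ℝ) + 2)) atTop (nhds 0) := by
      have := h1.inv_tendsto_atTop
      simp only [one_div]
      exact this
    have h3 : Tendsto (fun k : ℕ => 1 - 1 / ((k : ℝ) + 2)) atTop (nhds 1) := by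
      have := (tendsto_const_nhds (x := (1:ℝ)) (f := atTop (α := ℕ))).sub h2
      simpa using this
    have h4 : Tendsto (fun k : ℕ => (1 - 1 / ((k : ℝ) + 2)) ^ (-(p / 2))) atTop
        (nhds 1) := by
      have := h3.rpow_const (p := -(p / 2)) (Or.inl one_ne_zero)
      simpa using this
    have := (tendsto_const_nhds (x := M) (f := atTop (α := ℕ))).mul h4
    simpa using this
  refine ge_of_tendsto' lim fun k => ?_
  apply main
  · positivity
  · rw [div_lt_one (by positivity)]
    linarith [Nat.cast_nonneg (α := ℝ) k]
end
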